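/- Let a, b, a', b', n ∈ ℕ with a + b ≤ n and a' + b' ≤ a + b, let ε > 0, and let U be an (a,b)-block-diagonal 2^n × 2^n unitary. Suppose 𝒲_{a',b'} ⊆ supp(U) and 4^{−n} · Σ_{x ∈ 𝒲_{a',b'}} |tr(W_x·U)|² ≥ 1 − ε²/2^{a+b}. Then ∥Π_{𝒲_{a',b'}}(U) − U∥_op ≤ ε. -/

import Mathlib

open scoped Kronecker Classical Matrix

namespace PauliSpec

/-- The field 𝔽₂. -/
abbrev F2 := ZMod 2

/-- The phase space 𝔽₂^{2n}, identified with pairs `(xX, xZ) ∈ 𝔽₂^n × 𝔽₂^n`. -/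
abbrev PhS (n : ℕ) := (Fin n → F2) × (Fin n → F2)

/-- Index type for `n`-qubit matrices: ℂ^{2^n} ≅ ⊗_{j=1}^n ℂ². -/
abbrev QIdx (n : ℕ) := Fin n → Fin 2

/-- The 2×2 Pauli X matrix. -/
def PauliX : Matrix (Fin 2) (Fin 2) ℂ := !![0, 1; 1, 0]

/-- The 2×2 Pauli Y matrix. -/
def PauliY : Matrix (Fin 2) (Fin 2) ℂ := !![0, -Complex.I; Complex.I, 0]

/-- The 2×2 Pauli Z matrix. -/
def PauliZ : Matrix (Fin 2) (Fin 2) ℂ := !![1, 0; 0, -1]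

/-- The Weyl operator `W_x := i^{xX·xZ} ⊗_j (X^{xX_j} Z^{xZ_j})`, written entrywise:
the `(u, v)` entry of the `n`-fold Kronecker product of matrices `M_j` is `∏_j (M_j)_{u_j v_j}`. -/
noncomputable def Weyl {n : ℕ} (x : PhS n) : Matrix (QIdx n) (QIdx n) ℂ :=
  fun u v =>
    (Complex.I ^ (∑ j, (x.1 j).val * (x.2 j).val)) *
      ∏ j, (PauliX ^ (x.1 j).val * PauliZ ^ (x.2 j).val) (u j) (v j)

/-- The symplectic product `[x,y] := ∑_j (xX_j·yZ_j + xZ_j·yX_j) ∈ 𝔽₂`. -/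
def sympl {n : ℕ} (x y : PhS n) : F2 :=
  ∑ j, (x.1 j * y.2 j + x.2 j * y.1 j)

lemma sympl_add_left {n : ℕ} (x y z : PhS n) :
    sympl (x + y) z = sympl x z + sympl y z := by
  simp only [sympl, Prod.fst_add, Prod.snd_add, Pi.add_apply, add_mul]
  rw [← Finset.sum_add_distrib]
  exact Finset.sum_congr rfl fun j _ => by ring

lemma sympl_smul_left {n : ℕ} (c : F2) (x z : PhS n) :
    sympl (c • x) z = c * sympl x z := by
  simp only [sympl, Prod.smul_fst, Prod.smul_snd, Pi.smul_apply, smul_eq_mul, Finset.mul_sum]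
  exact Finset.sum_congr rfl fun j _ => by ring

/-- The symplectic complement `S^⊥ := {x : [x,y] = 0 for all y ∈ S}`. -/
def symplComplement {n : ℕ} (S : Submodule F2 (PhS n)) : Submodule F2 (PhS n) where
  carrier := {x | ∀ y ∈ S, sympl x y = 0}
  add_mem' := by
    intro a b ha hb y hy
    rw [sympl_add_left, ha y hy, hb y hy, add_zero]
  zero_mem' := by
    intro y hy
    simp [sympl]
  smul_mem' := by
    intro c x hx y hy
    rw [sympl_smul_left, hx y hy, mul_zero]

/-- The Pauli support `supp(A) := {x : tr(W_x·A) ≠ 0}`. -/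
noncomputable def pauliSupport {n : ℕ} (A : Matrix (QIdx n) (QIdx n) ℂ) : Set (PhS n) :=
  {x | (Weyl x * A).trace ≠ 0}

/-- The Pauli projection `Π_S(A) := 2^{−n} ∑_{x∈S} tr(A·W_x)·W_x`. -/
noncomputable def pauliProj {n : ℕ} (S : Set (PhS n)) (A : Matrix (QIdx n) (QIdx n) ℂ) :
    Matrix (QIdx n) (QIdx n) ℂ :=
  (2 ^ n : ℂ)⁻¹ • ∑ᶠ x ∈ S, (A * Weyl x).trace • Weyl x

/-- The subspace `𝒲_{a,b} ⊆ 𝔽₂^{2n}`: `xX_j = 0` on the first `n−a` coordinates and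
`xZ_j = 0` on the first `n−a−b` coordinates. -/
def Wab (n a b : ℕ) : Submodule F2 (PhS n) where
  carrier := {x | (∀ j : Fin n, (j : ℕ) < n - a → x.1 j = 0) ∧
    ∀ j : Fin n, (j : ℕ) < n - a - b → x.2 j = 0}
  add_mem' := by
    rintro x y ⟨hx1, hx2⟩ ⟨hy1, hy2⟩
    refine ⟨fun j hj => ?_, fun j hj => ?_⟩
    · simp [Prod.fst_add, Pi.add_apply, hx1 j hj, hy1 j hj]
    · simp [Prod.snd_add, Pi.add_apply, hx2 j hj, hy2 j hj]
  zero_mem' := ⟨fun j _ => rfl, fun j _ => rfl⟩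
  smul_mem' := by
    rintro c x ⟨hx1, hx2⟩
    refine ⟨fun j hj => ?_, fun j hj => ?_⟩
    · simp [Prod.smul_fst, Pi.smul_apply, hx1 j hj]
    · simp [Prod.smul_snd, Pi.smul_apply, hx2 j hj]

/-- `A` is `(a,b)`-block-diagonal: under ℂ^{2^n} ≅ ℂ^{2^{n−a−b}} ⊗ ℂ^{2^b} ⊗ ℂ^{2^a},
`A = I ⊗ (∑_{y∈{0,1}^b} |y⟩⟨y| ⊗ A_y)`.  Entrywise: `A u v = 0` unless `u, v` agree on the
first `n−a` coordinates, and then the entry is `A_{u₂}(u₃, v₃)` where `u₂` is the middle `b`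
coordinates and `u₃, v₃` the last `a` coordinates. -/
def IsBlockDiag {n : ℕ} (a b : ℕ) (hab : a + b ≤ n)
    (A : Matrix (QIdx n) (QIdx n) ℂ) : Prop :=
  ∃ M : (Fin b → Fin 2) → Matrix (Fin a → Fin 2) (Fin a → Fin 2) ℂ,
    ∀ u v : QIdx n,
      A u v =
        if ∀ j : Fin n, (j : ℕ) < n - a → u j = v j then
          M (fun i => u ⟨n - a - b + i.1, by have := i.2; omega⟩)
            (fun i => u ⟨n - a + i.1, by have := i.2; omega⟩)
            (fun i => v ⟨n - a + i.1, by have := i.2; omega⟩)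
        else 0

/-- The ℓ² → ℓ² operator norm of a complex matrix. -/
noncomputable def l2OpNorm {ι κ : Type*} [Fintype ι] [Fintype κ] [DecidableEq κ]
    (A : Matrix ι κ ℂ) : ℝ :=
  ‖LinearMap.toContinuousLinearMap (Matrix.toEuclideanLin A)‖

/-- `C` is a Clifford unitary: it is unitary and conjugates every Weyl operator to a
signed Weyl operator. -/
def IsCliffordUnitary {n : ℕ} (C : Matrix (QIdx n) (QIdx n) ℂ) : Prop :=
  C ∈ Matrix.unitaryGroup (QIdx n) ℂ ∧
    ∀ x : PhS n, ∃ (y : PhS n) (s : ℂ), (s = 1 ∨ s = -1) ∧ C * Weyl x * Cᴴ = s • Weyl y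

/-- `C T C† := {y : ∃ x ∈ T, C·W_x·C† = ±W_y}`. -/
def conjSet {n : ℕ} (C : Matrix (QIdx n) (QIdx n) ℂ) (T : Set (PhS n)) : Set (PhS n) :=
  {y | ∃ x ∈ T, ∃ s : ℂ, (s = 1 ∨ s = -1) ∧ C * Weyl x * Cᴴ = s • Weyl y}

/-- The matrix acting as the 2×2 matrix `P` on qubit `i` and as the identity elsewhere:
`P_i := I^{⊗(i−1)} ⊗ P ⊗ I^{⊗(n−i)}`. -/
def onQubit {n : ℕ} (P : Matrix (Fin 2) (Fin 2) ℂ) (i : Fin n) :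
    Matrix (QIdx n) (QIdx n) ℂ :=
  fun u v => if ∀ j : Fin n, j ≠ i → u j = v j then P (u i) (v i) else 0

/-- The unitary on `2n` qubits exchanging the `i`-th qubit of the first group of `n`
qubits with the `i`-th qubit of the second group. -/
def swapQubit {n : ℕ} (i : Fin n) :
    Matrix (QIdx n × QIdx n) (QIdx n × QIdx n) ℂ :=
  fun p q =>
    if p.1 = Function.update q.1 i (q.2 i) ∧ p.2 = Function.update q.2 i (q.1 i) then 1 else 0


/-! ### Auxiliary lemmas for stmt14 -/

section Aux

lemma F2cases (a : F2) : a = 0 ∨ a = 1 := by revert a; decide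

lemma F2sum (f : F2 → ℂ) : ∑ a : F2, f a = f 0 + f 1 := by
  rw [show (Finset.univ : Finset F2) = ({0, 1} : Finset F2) from rfl]
  rw [Finset.sum_pair (by decide)]

lemma pair_orth (a b c d : F2) :
    ∑ s : Fin 2, ∑ t : Fin 2,
      (PauliX ^ a.val * PauliZ ^ b.val) s t * (PauliX ^ c.val * PauliZ ^ d.val) s t =
    if a = c ∧ b = d then 2 else 0 := by
  rcases F2cases a with rfl|rfl <;> rcases F2cases b with rfl|rfl <;>
    rcases F2cases c with rfl|rfl <;> rcases F2cases d with rfl|rfl <;>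
    norm_num [Fin.sum_univ_two, PauliX, PauliZ, ZMod.val_zero, ZMod.val_one,
      Matrix.mul_apply, Matrix.one_apply]

lemma pair_complete (s t u v : Fin 2) :
    ∑ a : F2, ∑ b : F2,
      ((-1 : ℂ) ^ (a.val * b.val) *
        ((PauliX ^ a.val * PauliZ ^ b.val) t s * (PauliX ^ a.val * PauliZ ^ b.val) u v)) =
    if t = v ∧ s = u then 2 else 0 := by
  rw [F2sum]
  rw [F2sum, F2sum]
  fin_cases s <;> fin_cases t <;> fin_cases u <;> fin_cases v <;>
    norm_num [PauliX, PauliZ, ZMod.val_zero, ZMod.val_one,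
      Matrix.mul_apply, Matrix.one_apply, Fin.sum_univ_two]

lemma entry_real (a b : F2) (s t : Fin 2) :
    (starRingEnd ℂ) ((PauliX ^ a.val * PauliZ ^ b.val) s t) =
      (PauliX ^ a.val * PauliZ ^ b.val) s t := by
  rcases F2cases a with rfl|rfl <;> rcases F2cases b with rfl|rfl <;>
  fin_cases s <;> fin_cases t <;>
    norm_num [PauliX, PauliZ, ZMod.val_zero, ZMod.val_one,
      Matrix.mul_apply, Matrix.one_apply, Fin.sum_univ_two]

lemma diag_zero (b : F2) (s t : Fin 2) (h : s ≠ t) :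
    (PauliX ^ (0 : F2).val * PauliZ ^ b.val) s t = 0 := by
  rcases F2cases b with rfl|rfl <;>
  fin_cases s <;> fin_cases t <;>
    norm_num [PauliX, PauliZ, ZMod.val_zero, ZMod.val_one,
      Matrix.mul_apply, Matrix.one_apply, Fin.sum_univ_two] <;> simp_all

lemma offdiag_zero (b : F2) (s : Fin 2) :
    (PauliX ^ (1 : F2).val * PauliZ ^ b.val) s s = 0 := by
  rcases F2cases b with rfl|rfl <;>
  fin_cases s <;>
    norm_num [PauliX, PauliZ, ZMod.val_zero, ZMod.val_one,
      Matrix.mul_apply, Matrix.one_apply, Fin.sum_univ_two]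

lemma id_entry (s : Fin 2) :
    (PauliX ^ (0 : F2).val * PauliZ ^ (0 : F2).val) s s = 1 := by
  fin_cases s <;>
    norm_num [PauliX, PauliZ, ZMod.val_zero, Matrix.mul_apply, Matrix.one_apply,
      Fin.sum_univ_two]

def flp (t : Fin 2) : Fin 2 := 1 - t

lemma flp_flp (t : Fin 2) : flp (flp t) = t := by fin_cases t <;> decide

lemma flp_inj : Function.Injective flp := by decide

lemma Z_flip (b : F2) (hb : b = 1) (s t : Fin 2) :
    (PauliX ^ (0 : F2).val * PauliZ ^ b.val) (flp s) (flp t) =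
      -(PauliX ^ (0 : F2).val * PauliZ ^ b.val) s t := by
  subst hb
  fin_cases s <;> fin_cases t <;>
    norm_num [flp, PauliX, PauliZ, ZMod.val_zero, ZMod.val_one,
      Matrix.mul_apply, Matrix.one_apply, Fin.sum_univ_two]

lemma mul_conj_norm' (z : ℂ) : z * star z = ((‖z‖ : ℂ)) ^ 2 := by
  rw [Complex.star_def, Complex.mul_conj, Complex.normSq_eq_norm_sq]
  push_cast
  ring

lemma sum_pair_prod {n : ℕ} {β : Type*} [Fintype β] [DecidableEq β] (H : Fin n → β → β → ℂ) :
    (∑ f : Fin n → β, ∑ g : Fin n → β, ∏ j, H j (f j) (g j)) =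
      ∏ j, ∑ p : β, ∑ q : β, H j p q := by
  have h1 : ∀ j : Fin n, (∑ p : β, ∑ q : β, H j p q) = ∑ pq : β × β, H j pq.1 pq.2 :=
    fun j => by rw [Fintype.sum_prod_type]
  have h2 := Finset.prod_univ_sum (fun _ : Fin n => (Finset.univ : Finset (β × β)))
    (fun j pq => H j pq.1 pq.2)
  rw [Fintype.piFinset_univ] at h2
  simp_rw [h1]
  rw [h2]
  calc ∑ f : Fin n → β, ∑ g : Fin n → β, ∏ j, H j (f j) (g j)
      = ∑ fg : (Fin n → β) × (Fin n → β), ∏ j, H j (fg.1 j) (fg.2 j) := by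
        rw [Fintype.sum_prod_type]
    _ = ∑ h : Fin n → β × β, ∏ j, H j (h j).1 (h j).2 :=
        Fintype.sum_equiv (Equiv.arrowProdEquivProdArrow (Fin n) (fun _ => β) (fun _ => β)).symm _ _
          (fun p => rfl)

lemma mem_Wab {n a b : ℕ} {x : PhS n} :
    x ∈ Wab n a b ↔ ((∀ j : Fin n, (j : ℕ) < n - a → x.1 j = 0) ∧
      ∀ j : Fin n, (j : ℕ) < n - a - b → x.2 j = 0) := Iff.rfl

lemma weyl_orth {n : ℕ} (x y : PhS n) :
    ∑ u : QIdx n, ∑ w : QIdx n, Weyl x u w * star (Weyl y u w) =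
      if x = y then (2 ^ n : ℂ) else 0 := by
  have key : ∀ u w : QIdx n, Weyl x u w * star (Weyl y u w) =
      (Complex.I ^ (∑ j, (x.1 j).val * (x.2 j).val) *
        (-Complex.I) ^ (∑ j, (y.1 j).val * (y.2 j).val)) *
      ∏ j, ((PauliX ^ (x.1 j).val * PauliZ ^ (x.2 j).val) (u j) (w j) *
            (PauliX ^ (y.1 j).val * PauliZ ^ (y.2 j).val) (u j) (w j)) := by
    intro u w
    rw [Complex.star_def]
    simp only [Weyl, map_mul, map_pow, map_prod, Complex.conj_I, entry_real]
    rw [Finset.prod_mul_distrib]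
    ring
  simp_rw [key, ← Finset.mul_sum]
  have hfac := sum_pair_prod (n := n) (β := Fin 2)
    (fun j p q => (PauliX ^ (x.1 j).val * PauliZ ^ (x.2 j).val) p q *
      (PauliX ^ (y.1 j).val * PauliZ ^ (y.2 j).val) p q)
  rw [hfac]
  simp_rw [pair_orth]
  by_cases hxy : x = y
  · subst hxy
    rw [if_pos rfl, ← mul_pow]
    have h1 : Complex.I * -Complex.I = 1 := by simp [Complex.I_mul_I]
    rw [h1, one_pow, one_mul]
    simp
  · rw [if_neg hxy]
    have hj : ∃ j, ¬(x.1 j = y.1 j ∧ x.2 j = y.2 j) := by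
      by_contra h
      push_neg at h
      exact hxy (Prod.ext (funext fun j => (h j).1) (funext fun j => (h j).2))
    obtain ⟨j, hj⟩ := hj
    apply mul_eq_zero_of_right
    exact Finset.prod_eq_zero (Finset.mem_univ j) (if_neg hj)

lemma weyl_complete {n : ℕ} (A : Matrix (QIdx n) (QIdx n) ℂ) (u v : QIdx n) :
    ∑ x : PhS n, (A * Weyl x).trace * Weyl x u v = 2 ^ n * A u v := by
  have inner : ∀ s t : QIdx n, (∑ x : PhS n, Weyl x t s * Weyl x u v) =
      if (∀ j, t j = v j ∧ s j = u j) then (2 : ℂ) ^ n else 0 := by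
    intro s t
    have key : ∀ x : PhS n, Weyl x t s * Weyl x u v =
        ∏ j, ((-1 : ℂ) ^ ((x.1 j).val * (x.2 j).val) *
          ((PauliX ^ (x.1 j).val * PauliZ ^ (x.2 j).val) (t j) (s j) *
           (PauliX ^ (x.1 j).val * PauliZ ^ (x.2 j).val) (u j) (v j))) := by
      intro x
      simp only [Weyl]
      rw [Finset.prod_mul_distrib, Finset.prod_mul_distrib, Finset.prod_pow_eq_pow_sum]
      have h2 : (Complex.I ^ (∑ j, (x.1 j).val * (x.2 j).val)) *
          (Complex.I ^ (∑ j, (x.1 j).val * (x.2 j).val)) =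
          (-1 : ℂ) ^ (∑ j, (x.1 j).val * (x.2 j).val) := by
        rw [← pow_add, ← two_mul, pow_mul, Complex.I_sq]
      calc (Complex.I ^ (∑ j, (x.1 j).val * (x.2 j).val) *
              ∏ j, (PauliX ^ (x.1 j).val * PauliZ ^ (x.2 j).val) (t j) (s j)) *
            (Complex.I ^ (∑ j, (x.1 j).val * (x.2 j).val) *
              ∏ j, (PauliX ^ (x.1 j).val * PauliZ ^ (x.2 j).val) (u j) (v j))
          = (Complex.I ^ (∑ j, (x.1 j).val * (x.2 j).val) *
              Complex.I ^ (∑ j, (x.1 j).val * (x.2 j).val)) *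
            ((∏ j, (PauliX ^ (x.1 j).val * PauliZ ^ (x.2 j).val) (t j) (s j)) *
             ∏ j, (PauliX ^ (x.1 j).val * PauliZ ^ (x.2 j).val) (u j) (v j)) := by ring
        _ = _ := by rw [h2]; try ring
    calc ∑ x : PhS n, Weyl x t s * Weyl x u v
        = ∑ f : Fin n → F2, ∑ g : Fin n → F2,
            ∏ j, ((-1 : ℂ) ^ ((f j).val * (g j).val) *
              ((PauliX ^ (f j).val * PauliZ ^ (g j).val) (t j) (s j) *
               (PauliX ^ (f j).val * PauliZ ^ (g j).val) (u j) (v j))) := by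
          rw [Fintype.sum_prod_type]
          exact Finset.sum_congr rfl fun f _ => Finset.sum_congr rfl fun g _ => key (f, g)
      _ = ∏ j, ∑ p : F2, ∑ q : F2,
            ((-1 : ℂ) ^ (p.val * q.val) *
              ((PauliX ^ p.val * PauliZ ^ q.val) (t j) (s j) *
               (PauliX ^ p.val * PauliZ ^ q.val) (u j) (v j))) :=
          sum_pair_prod (n := n) (β := F2) (fun j p q =>
            (-1 : ℂ) ^ (p.val * q.val) *
              ((PauliX ^ p.val * PauliZ ^ q.val) (t j) (s j) *
               (PauliX ^ p.val * PauliZ ^ q.val) (u j) (v j)))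
      _ = ∏ j, (if t j = v j ∧ s j = u j then (2 : ℂ) else 0) :=
          Finset.prod_congr rfl fun j _ => pair_complete (s j) (t j) (u j) (v j)
      _ = if (∀ j, t j = v j ∧ s j = u j) then (2 : ℂ) ^ n else 0 := by
          by_cases h : ∀ j, t j = v j ∧ s j = u j
          · rw [if_pos h, Finset.prod_congr rfl (fun j _ => if_pos (h j))]
            simp
          · rw [if_neg h]
            obtain ⟨j, hj⟩ := not_forall.mp h
            exact Finset.prod_eq_zero (Finset.mem_univ j) (if_neg hj)
  have tr : ∀ x : PhS n, (A * Weyl x).trace = ∑ s, ∑ t, A s t * Weyl x t s := by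
    intro x; simp [Matrix.trace, Matrix.diag, Matrix.mul_apply]
  calc ∑ x : PhS n, (A * Weyl x).trace * Weyl x u v
      = ∑ x : PhS n, ∑ s, ∑ t, A s t * (Weyl x t s * Weyl x u v) := by
        simp_rw [tr, Finset.sum_mul, mul_assoc]
    _ = ∑ s, ∑ t, A s t * ∑ x : PhS n, Weyl x t s * Weyl x u v := by
        rw [Finset.sum_comm]
        refine Finset.sum_congr rfl fun s _ => ?_
        rw [Finset.sum_comm]
        exact Finset.sum_congr rfl fun t _ => by rw [← Finset.mul_sum]
    _ = ∑ s, ∑ t, A s t * (if (∀ j, t j = v j ∧ s j = u j) then (2 : ℂ) ^ n else 0) := by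
        simp_rw [inner]
    _ = 2 ^ n * A u v := by
        have hcond : ∀ s t : QIdx n,
            (∀ j, t j = v j ∧ s j = u j) ↔ (t = v ∧ s = u) := by
          intro s t
          constructor
          · intro h
            exact ⟨funext fun j => (h j).1, funext fun j => (h j).2⟩
          · rintro ⟨rfl, rfl⟩ j
            exact ⟨rfl, rfl⟩
        simp_rw [hcond, mul_ite, mul_zero, ite_and]
        rw [Finset.sum_comm]
        simp [Finset.sum_ite_eq]
        ring

def flipAt {n : ℕ} (j0 : Fin n) : QIdx n ≃ QIdx n where
  toFun u := Function.update u j0 (flp (u j0))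
  invFun u := Function.update u j0 (flp (u j0))
  left_inv u := by
    funext j
    rcases eq_or_ne j j0 with rfl | hj
    · simp [flp_flp]
    · simp [Function.update_of_ne hj]
  right_inv u := by
    funext j
    rcases eq_or_ne j j0 with rfl | hj
    · simp [flp_flp]
    · simp [Function.update_of_ne hj]

lemma weyl_diag {n a b : ℕ} {x : PhS n} (hx : x ∈ Wab n a b) (u w : QIdx n)
    (j0 : Fin n) (hj0 : (j0 : ℕ) < n - a) (hne : u j0 ≠ w j0) : Weyl x u w = 0 := by
  apply mul_eq_zero_of_right
  apply Finset.prod_eq_zero (Finset.mem_univ j0)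
  rw [(mem_Wab.mp hx).1 j0 hj0]
  exact diag_zero _ _ _ hne

lemma weyl_shift {n a b : ℕ} {x : PhS n} (hx : x ∈ Wab n a b) (u w u' w' : QIdx n)
    (hd : ∀ j : Fin n, (j : ℕ) < n - a → u j = w j)
    (hd' : ∀ j : Fin n, (j : ℕ) < n - a → u' j = w' j)
    (hh : ∀ j : Fin n, n - a - b ≤ (j : ℕ) → u j = u' j ∧ w j = w' j) :
    Weyl x u w = Weyl x u' w' := by
  unfold Weyl
  congr 1
  apply Finset.prod_congr rfl
  intro j _
  by_cases hjh : n - a - b ≤ (j : ℕ)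
  · rw [(hh j hjh).1, (hh j hjh).2]
  · push_neg at hjh
    have hja : (j : ℕ) < n - a := lt_of_lt_of_le hjh (by omega : n - a - b ≤ n - a)
    rw [(mem_Wab.mp hx).1 j hja, (mem_Wab.mp hx).2 j hjh, hd j hja, hd' j hja,
      id_entry, id_entry]

lemma trace_zero_of_not_mem {n a b : ℕ} {hab : a + b ≤ n}
    {U : Matrix (QIdx n) (QIdx n) ℂ} (hbd : IsBlockDiag a b hab U)
    {x : PhS n} (hx : x ∉ Wab n a b) : (U * Weyl x).trace = 0 := by
  obtain ⟨M, hM⟩ := hbd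
  have tr : (U * Weyl x).trace = ∑ u : QIdx n, ∑ w : QIdx n, U u w * Weyl x w u := by
    simp [Matrix.trace, Matrix.diag, Matrix.mul_apply]
  rw [tr]
  rw [mem_Wab] at hx
  by_cases hP : ∀ j : Fin n, (j : ℕ) < n - a → x.1 j = 0
  · -- second condition fails
    have hQ : ∃ j : Fin n, (j : ℕ) < n - a - b ∧ x.2 j ≠ 0 := by
      by_contra h
      push_neg at h
      exact hx ⟨hP, h⟩
    obtain ⟨j0, hj0, hz⟩ := hQ
    have hz1 : x.2 j0 = 1 := (F2cases _).resolve_left hz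
    have hx10 : x.1 j0 = 0 := hP j0 (lt_of_lt_of_le hj0 (by omega))
    set σ := flipAt j0 with hσ
    set T : QIdx n × QIdx n → ℂ := fun p => U p.1 p.2 * Weyl x p.2 p.1 with hT
    have htr : (∑ u : QIdx n, ∑ w : QIdx n, U u w * Weyl x w u) =
        ∑ p : QIdx n × QIdx n, T p := by
      rw [Fintype.sum_prod_type]
    rw [htr]
    have hUeq : ∀ u w : QIdx n, U (σ u) (σ w) = U u w := by
      intro u w
      have hcond : (∀ j : Fin n, (j : ℕ) < n - a → (σ u) j = (σ w) j) ↔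
          (∀ j : Fin n, (j : ℕ) < n - a → u j = w j) := by
        constructor
        · intro h j hj
          have := h j hj
          rcases eq_or_ne j j0 with rfl | hne
          · simp only [hσ, flipAt, Equiv.coe_fn_mk, Function.update_self] at this
            exact flp_inj this
          · simpa only [hσ, flipAt, Equiv.coe_fn_mk, Function.update_of_ne hne] using this
        · intro h j hj
          rcases eq_or_ne j j0 with rfl | hne
          · simp only [hσ, flipAt, Equiv.coe_fn_mk, Function.update_self]
            rw [h j hj]
          · simp only [hσ, flipAt, Equiv.coe_fn_mk, Function.update_of_ne hne]
            exact h j hj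
      rw [hM (σ u) (σ w), hM u w]
      by_cases hc : ∀ j : Fin n, (j : ℕ) < n - a → u j = w j
      · rw [if_pos hc, if_pos (hcond.mpr hc)]
        have e1 : (fun i : Fin b => (σ u) ⟨n - a - b + i.1, by have := i.2; omega⟩) =
            (fun i : Fin b => u ⟨n - a - b + i.1, by have := i.2; omega⟩) := by
          funext i
          apply Function.update_of_ne
          intro hcontra
          have : n - a - b + i.1 = (j0 : ℕ) := congrArg Fin.val hcontra
          omega
        have e2 : (fun i : Fin a => (σ u) ⟨n - a + i.1, by have := i.2; omega⟩) =
            (fun i : Fin a => u ⟨n - a + i.1, by have := i.2; omega⟩) := by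
          funext i
          apply Function.update_of_ne
          intro hcontra
          have : n - a + i.1 = (j0 : ℕ) := congrArg Fin.val hcontra
          omega
        have e3 : (fun i : Fin a => (σ w) ⟨n - a + i.1, by have := i.2; omega⟩) =
            (fun i : Fin a => w ⟨n - a + i.1, by have := i.2; omega⟩) := by
          funext i
          apply Function.update_of_ne
          intro hcontra
          have : n - a + i.1 = (j0 : ℕ) := congrArg Fin.val hcontra
          omega
        rw [e1, e2, e3]
      · rw [if_neg hc, if_neg (fun hcc => hc (hcond.mp hcc))]
    have hWeq : ∀ u w : QIdx n, Weyl x (σ w) (σ u) = -Weyl x w u := by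
      intro u w
      unfold Weyl
      rw [← Finset.mul_prod_erase _ _ (Finset.mem_univ j0),
        ← Finset.mul_prod_erase _
          (fun j => (PauliX ^ (x.1 j).val * PauliZ ^ (x.2 j).val) (w j) (u j))
          (Finset.mem_univ j0)]
      have hrest : ∏ j ∈ Finset.univ.erase j0,
          (PauliX ^ (x.1 j).val * PauliZ ^ (x.2 j).val) ((σ w) j) ((σ u) j) =
          ∏ j ∈ Finset.univ.erase j0,
          (PauliX ^ (x.1 j).val * PauliZ ^ (x.2 j).val) (w j) (u j) := by
        apply Finset.prod_congr rfl
        intro j hj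
        have hne := Finset.ne_of_mem_erase hj
        simp only [hσ, flipAt, Equiv.coe_fn_mk, Function.update_of_ne hne]
      have hfac : (PauliX ^ (x.1 j0).val * PauliZ ^ (x.2 j0).val) ((σ w) j0) ((σ u) j0) =
          -(PauliX ^ (x.1 j0).val * PauliZ ^ (x.2 j0).val) (w j0) (u j0) := by
        simp only [hσ, flipAt, Equiv.coe_fn_mk, Function.update_self]
        rw [hx10]
        exact Z_flip _ hz1 _ _
      rw [hrest, hfac]
      ring
    have hneg : ∀ p : QIdx n × QIdx n, T (σ p.1, σ p.2) = -T p := by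
      intro p
      simp only [hT]
      rw [hUeq, hWeq]
      ring
    have hsum : (∑ p : QIdx n × QIdx n, T p) =
        ∑ p : QIdx n × QIdx n, T (σ p.1, σ p.2) := by
      rw [← Equiv.sum_comp (Equiv.prodCongr σ σ) T]
      rfl
    have h2 : (∑ p : QIdx n × QIdx n, T p) = -∑ p : QIdx n × QIdx n, T p := by
      nth_rewrite 1 [hsum]
      rw [← Finset.sum_neg_distrib]
      exact Finset.sum_congr rfl fun p _ => hneg p
    have := add_eq_zero_iff_eq_neg.mpr h2
    have h3 : (2 : ℂ) * ∑ p : QIdx n × QIdx n, T p = 0 := by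
      rw [two_mul]
      exact this
    exact (mul_eq_zero.mp h3).resolve_left two_ne_zero
  · -- first condition fails
    push_neg at hP
    obtain ⟨j0, hj0, h1⟩ := hP
    apply Finset.sum_eq_zero
    intro u _
    apply Finset.sum_eq_zero
    intro w _
    by_cases hUu : ∀ j : Fin n, (j : ℕ) < n - a → u j = w j
    · have hx1 : x.1 j0 = 1 := (F2cases _).resolve_left h1
      have hW : Weyl x w u = 0 := by
        apply mul_eq_zero_of_right
        apply Finset.prod_eq_zero (Finset.mem_univ j0)
        rw [hx1, show w j0 = u j0 from (hUu j0 hj0).symm]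
        exact offdiag_zero _ _
      rw [hW, mul_zero]
    · have hU0 : U u w = 0 := by rw [hM u w, if_neg hUu]
      rw [hU0, zero_mul]

lemma swap4 {n : ℕ} (T : Finset (PhS n)) (F : QIdx n → QIdx n → PhS n → PhS n → ℂ) :
    (∑ u : QIdx n, ∑ w : QIdx n, ∑ x ∈ T, ∑ y ∈ T, F u w x y) =
      ∑ x ∈ T, ∑ y ∈ T, ∑ u : QIdx n, ∑ w : QIdx n, F u w x y := by
  calc ∑ u : QIdx n, ∑ w : QIdx n, ∑ x ∈ T, ∑ y ∈ T, F u w x y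
      = ∑ u : QIdx n, ∑ x ∈ T, ∑ w : QIdx n, ∑ y ∈ T, F u w x y :=
        Finset.sum_congr rfl fun u _ => Finset.sum_comm
    _ = ∑ x ∈ T, ∑ u : QIdx n, ∑ w : QIdx n, ∑ y ∈ T, F u w x y := Finset.sum_comm
    _ = ∑ x ∈ T, ∑ u : QIdx n, ∑ y ∈ T, ∑ w : QIdx n, F u w x y :=
        Finset.sum_congr rfl fun x _ => Finset.sum_congr rfl fun u _ => Finset.sum_comm
    _ = ∑ x ∈ T, ∑ y ∈ T, ∑ u : QIdx n, ∑ w : QIdx n, F u w x y :=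
        Finset.sum_congr rfl fun x _ => Finset.sum_comm

lemma frob {n : ℕ} (T : Finset (PhS n)) (c : PhS n → ℂ) :
    ∑ u : QIdx n, ∑ w : QIdx n, ‖∑ x ∈ T, c x * Weyl x u w‖ ^ 2 =
      2 ^ n * ∑ x ∈ T, ‖c x‖ ^ 2 := by
  have main : (((∑ u : QIdx n, ∑ w : QIdx n, ‖∑ x ∈ T, c x * Weyl x u w‖ ^ 2 : ℝ)) : ℂ) =
      (((2 ^ n * ∑ x ∈ T, ‖c x‖ ^ 2 : ℝ)) : ℂ) := by
    push_cast
    calc ∑ u : QIdx n, ∑ w : QIdx n, ((‖∑ x ∈ T, c x * Weyl x u w‖ : ℂ)) ^ 2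
        = ∑ u : QIdx n, ∑ w : QIdx n,
            (∑ x ∈ T, c x * Weyl x u w) * star (∑ y ∈ T, c y * Weyl y u w) := by
          refine Finset.sum_congr rfl fun u _ => Finset.sum_congr rfl fun w _ => ?_
          rw [mul_conj_norm']
      _ = ∑ u : QIdx n, ∑ w : QIdx n, ∑ x ∈ T, ∑ y ∈ T,
            (c x * star (c y)) * (Weyl x u w * star (Weyl y u w)) := by
          refine Finset.sum_congr rfl fun u _ => Finset.sum_congr rfl fun w _ => ?_
          rw [star_sum, Finset.sum_mul_sum]
          refine Finset.sum_congr rfl fun x _ => Finset.sum_congr rfl fun y _ => ?_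
          rw [star_mul']
          ring
      _ = ∑ x ∈ T, ∑ y ∈ T, ∑ u : QIdx n, ∑ w : QIdx n,
            (c x * star (c y)) * (Weyl x u w * star (Weyl y u w)) := swap4 T _
      _ = ∑ x ∈ T, ∑ y ∈ T,
            (c x * star (c y)) * (if x = y then (2 ^ n : ℂ) else 0) := by
          refine Finset.sum_congr rfl fun x _ => Finset.sum_congr rfl fun y _ => ?_
          rw [← weyl_orth x y]
          rw [Finset.mul_sum]
          exact Finset.sum_congr rfl fun u _ => by rw [Finset.mul_sum]
      _ = ∑ x ∈ T, (c x * star (c x)) * (2 ^ n : ℂ) := by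
          refine Finset.sum_congr rfl fun x hx => ?_
          simp_rw [mul_ite, mul_zero]
          rw [Finset.sum_ite_eq T x (fun y => c x * star (c y) * (2 ^ n : ℂ))]
          rw [if_pos hx]
      _ = (2 : ℂ) ^ n * ∑ x ∈ T, ((‖c x‖ : ℂ)) ^ 2 := by
          rw [Finset.mul_sum]
          refine Finset.sum_congr rfl fun x _ => ?_
          rw [mul_conj_norm']
          ring
  exact_mod_cast main

end Aux

theorem stmt14 (a b a' b' n : ℕ) (hab : a + b ≤ n) (hab' : a' + b' ≤ a + b)
    (ε : ℝ) (hε : 0 < ε)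
    (U : Matrix (QIdx n) (QIdx n) ℂ) (hU : U ∈ Matrix.unitaryGroup (QIdx n) ℂ)
    (hbd : IsBlockDiag a b hab U)
    (hsupp : (Wab n a' b' : Set (PhS n)) ⊆ pauliSupport U)
    (hweight : 1 - ε ^ 2 / 2 ^ (a + b) ≤
      (4 ^ n : ℝ)⁻¹ * ∑ᶠ x ∈ (Wab n a' b' : Set (PhS n)), ‖(Weyl x * U).trace‖ ^ 2) :
    l2OpNorm (pauliProj (Wab n a' b' : Set (PhS n)) U - U) ≤ ε := by
  classical
  set c : PhS n → ℂ := fun x => (U * Weyl x).trace with hc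
  set Sfin : Finset (PhS n) := Finset.univ.filter (fun x => x ∈ Wab n a' b') with hSfindef
  set T : Finset (PhS n) := Finset.univ.filter
    (fun x => x ∈ Wab n a b ∧ x ∉ Wab n a' b') with hTdef
  set D : Matrix (QIdx n) (QIdx n) ℂ := pauliProj (Wab n a' b' : Set (PhS n)) U - U with hDdef
  have hpow2 : (0 : ℝ) < 2 ^ n := by positivity
  have hpow2C : ((2 : ℂ) ^ n) ≠ 0 := pow_ne_zero n two_ne_zero
  have h4pos : (0 : ℝ) < 4 ^ n := by positivity
  have habpos : (0 : ℝ) < 2 ^ (a + b) := by positivity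
  -- entry formula for D
  have hDentry : ∀ u w : QIdx n, D u w = -(2 ^ n : ℂ)⁻¹ * ∑ x ∈ T, c x * Weyl x u w := by
    intro u w
    have hcoe : ((Wab n a' b' : Submodule F2 (PhS n)) : Set (PhS n)) =
        (↑Sfin : Set (PhS n)) := by
      ext z
      simp [hSfindef]
    have hproj : pauliProj (Wab n a' b' : Set (PhS n)) U u w =
        (2 ^ n : ℂ)⁻¹ * ∑ x ∈ Sfin, c x * Weyl x u w := by
      rw [pauliProj, hcoe, finsum_mem_coe_finset]
      simp [Matrix.smul_apply, Matrix.sum_apply, smul_eq_mul, Finset.mul_sum]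
      rfl
    have hUentry : U u w = (2 ^ n : ℂ)⁻¹ * ∑ x : PhS n, c x * Weyl x u w := by
      have := weyl_complete U u w
      rw [hc]
      rw [this, inv_mul_cancel_left₀ hpow2C]
    have hsplit : (∑ x : PhS n, c x * Weyl x u w) =
        (∑ x ∈ Sfin, c x * Weyl x u w) + ∑ x ∈ Finset.univ \ Sfin, c x * Weyl x u w := by
      rw [add_comm, Finset.sum_sdiff (Finset.subset_univ Sfin)]
    have hTsub : T ⊆ Finset.univ \ Sfin := by
      intro x hx
      simp only [hTdef, Finset.mem_filter, Finset.mem_univ, true_and] at hx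
      simp only [Finset.mem_sdiff, Finset.mem_univ, true_and, hSfindef,
        Finset.mem_filter, not_and]
      exact hx.2
    have hTsum : (∑ x ∈ Finset.univ \ Sfin, c x * Weyl x u w) =
        ∑ x ∈ T, c x * Weyl x u w := by
      symm
      apply Finset.sum_subset hTsub
      intro x hx hxT
      have hxS : x ∉ Wab n a' b' := by
        simp only [Finset.mem_sdiff, Finset.mem_univ, true_and, hSfindef,
          Finset.mem_filter, not_and] at hx
        exact hx
      have hxB : x ∉ Wab n a b := by
        intro hmem
        apply hxT
        simp only [hTdef, Finset.mem_filter, Finset.mem_univ, true_and]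
        exact ⟨hmem, hxS⟩
      have hc0 : c x = 0 := by
        rw [hc]
        exact trace_zero_of_not_mem hbd hxB
      rw [hc0, zero_mul]
    rw [hDdef, Matrix.sub_apply, hproj, hUentry, hsplit, hTsum]
    ring
  have hTmem : ∀ x ∈ T, x ∈ Wab n a b := by
    intro x hx
    simp only [hTdef, Finset.mem_filter] at hx
    exact hx.2.1
  -- block structure of D
  have hD0 : ∀ u w : QIdx n, (∃ j : Fin n, (j : ℕ) < n - a ∧ u j ≠ w j) → D u w = 0 := by
    intro u w ⟨j, hj, hne⟩
    rw [hDentry u w]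
    have : (∑ x ∈ T, c x * Weyl x u w) = 0 := by
      apply Finset.sum_eq_zero
      intro x hx
      rw [weyl_diag (hTmem x hx) u w j hj hne, mul_zero]
    rw [this, mul_zero]
  have hDsh : ∀ u w u' w' : QIdx n,
      (∀ j : Fin n, (j : ℕ) < n - a → u j = w j) →
      (∀ j : Fin n, (j : ℕ) < n - a → u' j = w' j) →
      (∀ j : Fin n, n - a - b ≤ (j : ℕ) → u j = u' j ∧ w j = w' j) →
      D u w = D u' w' := by
    intro u w u' w' hd hd' hh
    rw [hDentry u w, hDentry u' w']
    congr 1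
    refine Finset.sum_congr rfl fun x hx => ?_
    rw [weyl_shift (hTmem x hx) u w u' w' hd hd' hh]
  -- Frobenius weight of D
  have hDfrob : (∑ u : QIdx n, ∑ w : QIdx n, ‖D u w‖ ^ 2) =
      (2 ^ n : ℝ)⁻¹ * ∑ x ∈ T, ‖c x‖ ^ 2 := by
    have hterm : ∀ u w : QIdx n, ‖D u w‖ ^ 2 =
        ((2 ^ n : ℝ)⁻¹) ^ 2 * ‖∑ x ∈ T, c x * Weyl x u w‖ ^ 2 := by
      intro u w
      rw [hDentry u w, norm_mul, mul_pow]
      congr 2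
      rw [norm_neg, norm_inv, norm_pow]
      norm_num
    simp_rw [hterm, ← Finset.mul_sum]
    rw [frob]
    field_simp
  -- total weight
  have hUU : U * Uᴴ = 1 := by
    rw [← Matrix.star_eq_conjTranspose]
    exact hU.2
  have hUfrob : (∑ u : QIdx n, ∑ w : QIdx n, ‖U u w‖ ^ 2) = 2 ^ n := by
    have h1 : (U * Uᴴ).trace = ((2 : ℝ) ^ n : ℂ) := by
      rw [hUU, Matrix.trace_one]
      norm_num [Fintype.card_fun]
    have h2 : (U * Uᴴ).trace =
        (((∑ u : QIdx n, ∑ w : QIdx n, ‖U u w‖ ^ 2 : ℝ)) : ℂ) := by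
      push_cast
      simp only [Matrix.trace, Matrix.diag, Matrix.mul_apply, Matrix.conjTranspose_apply]
      exact Finset.sum_congr rfl fun u _ => Finset.sum_congr rfl fun w _ => mul_conj_norm' _
    rw [h2] at h1
    exact_mod_cast h1
  have htotal : (∑ x : PhS n, ‖c x‖ ^ 2) = 4 ^ n := by
    have hfr := frob (Finset.univ : Finset (PhS n)) c
    have hA : ∀ u w : QIdx n, ‖∑ x : PhS n, c x * Weyl x u w‖ ^ 2 =
        ((2 : ℝ) ^ n) ^ 2 * ‖U u w‖ ^ 2 := by
      intro u w
      have hsum : (∑ x : PhS n, c x * Weyl x u w) = (2 : ℂ) ^ n * U u w := by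
        rw [hc]
        exact weyl_complete U u w
      rw [hsum, norm_mul, mul_pow]
      congr 2
      rw [norm_pow]
      norm_num
    simp_rw [hA, ← Finset.mul_sum] at hfr
    rw [hUfrob] at hfr
    have h2 : ((2 : ℝ) ^ n) ^ 2 * 2 ^ n = 2 ^ n * (((2 : ℝ) ^ n) ^ 2) := by ring
    rw [h2] at hfr
    have hcanc := mul_left_cancel₀ (ne_of_gt hpow2) hfr
    have h4 : (4 : ℝ) ^ n = ((2 : ℝ) ^ n) ^ 2 := by
      rw [show (4 : ℝ) = 2 ^ 2 by norm_num, ← pow_mul, mul_comm, pow_mul]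
    rw [← hcanc, h4]
  -- weight of Sfin from hweight
  have hcoe : ((Wab n a' b' : Submodule F2 (PhS n)) : Set (PhS n)) =
      (↑Sfin : Set (PhS n)) := by
    ext z
    simp [hSfindef]
  rw [hcoe, finsum_mem_coe_finset] at hweight
  have htrc : (∑ x ∈ Sfin, ‖(Weyl x * U).trace‖ ^ 2) = ∑ x ∈ Sfin, ‖c x‖ ^ 2 := by
    refine Finset.sum_congr rfl fun x _ => ?_
    rw [hc, Matrix.trace_mul_comm]
  rw [htrc] at hweight
  have hSw : (1 - ε ^ 2 / 2 ^ (a + b)) * 4 ^ n ≤ ∑ x ∈ Sfin, ‖c x‖ ^ 2 := by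
    have := mul_le_mul_of_nonneg_right hweight (le_of_lt h4pos)
    calc (1 - ε ^ 2 / 2 ^ (a + b)) * 4 ^ n
        ≤ ((4 ^ n : ℝ)⁻¹ * ∑ x ∈ Sfin, ‖c x‖ ^ 2) * 4 ^ n := this
      _ = ∑ x ∈ Sfin, ‖c x‖ ^ 2 := by
          field_simp
  -- weight of T
  have hTw : (∑ x ∈ T, ‖c x‖ ^ 2) ≤ ε ^ 2 / 2 ^ (a + b) * 4 ^ n := by
    have hdisj : Disjoint T Sfin := by
      rw [Finset.disjoint_left]
      intro x hxT hxS
      simp only [hTdef, Finset.mem_filter, Finset.mem_univ, true_and] at hxT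
      simp only [hSfindef, Finset.mem_filter, Finset.mem_univ, true_and] at hxS
      exact hxT.2 hxS
    have hsub : (∑ x ∈ T, ‖c x‖ ^ 2) + ∑ x ∈ Sfin, ‖c x‖ ^ 2 ≤ 4 ^ n := by
      rw [← Finset.sum_union hdisj, ← htotal]
      exact Finset.sum_le_sum_of_subset_of_nonneg (Finset.subset_univ _)
        (fun _ _ _ => by positivity)
    linarith
  -- Frobenius bound
  have hFD : (∑ u : QIdx n, ∑ w : QIdx n, ‖D u w‖ ^ 2) ≤
      2 ^ n * (ε ^ 2 / 2 ^ (a + b)) := by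
    rw [hDfrob]
    have h4 : (4 : ℝ) ^ n = 2 ^ n * 2 ^ n := by
      rw [← mul_pow]
      norm_num
    calc (2 ^ n : ℝ)⁻¹ * ∑ x ∈ T, ‖c x‖ ^ 2
        ≤ (2 ^ n : ℝ)⁻¹ * (ε ^ 2 / 2 ^ (a + b) * 4 ^ n) := by
          apply mul_le_mul_of_nonneg_left hTw (by positivity)
      _ = 2 ^ n * (ε ^ 2 / 2 ^ (a + b)) := by
          rw [h4]
          field_simp
  -- the slice sets
  set A : QIdx n → Finset (QIdx n) := fun v =>
    Finset.univ.filter (fun w => ∀ j : Fin n, (j : ℕ) < n - a → w j = v j) with hAdef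
  have hmemA : ∀ v w : QIdx n, w ∈ A v ↔ (∀ j : Fin n, (j : ℕ) < n - a → w j = v j) := by
    intro v w
    simp [hAdef]
  -- slice bound
  have hslice : ∀ v : QIdx n, (∑ u ∈ A v, ∑ w ∈ A v, ‖D u w‖ ^ 2) ≤ ε ^ 2 := by
    intro v
    have hma : n - a - b ≤ n - a := by omega
    set py : (Fin (n - a - b) → Fin 2) → QIdx n → QIdx n :=
      fun y u j => if h : (j : ℕ) < n - a - b then y ⟨j, h⟩ else u j with hpy
    set G : ((Fin (n - a - b) → Fin 2) × (QIdx n × QIdx n)) → QIdx n × QIdx n :=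
      fun q => (py q.1 q.2.1, py q.1 q.2.2) with hG
    set dom : Finset ((Fin (n - a - b) → Fin 2) × (QIdx n × QIdx n)) :=
      Finset.univ ×ˢ ((A v) ×ˢ (A v)) with hdom
    have hval : ∀ (y : Fin (n - a - b) → Fin 2) (u w : QIdx n), u ∈ A v → w ∈ A v →
        D (py y u) (py y w) = D u w := by
      intro y u w hu hw
      rw [hmemA] at hu hw
      apply hDsh
      · intro j hj
        by_cases hjm : (j : ℕ) < n - a - b
        · simp only [hpy, dif_pos hjm]
        · simp only [hpy, dif_neg hjm]
          rw [hu j hj, hw j hj]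
      · intro j hj
        rw [hu j hj, hw j hj]
      · intro j hj
        have hnot : ¬((j : ℕ) < n - a - b) := not_lt.mpr hj
        constructor <;> simp only [hpy, dif_neg hnot]
    have hinj : ∀ q ∈ dom, ∀ q' ∈ dom, G q = G q' → q = q' := by
      rintro ⟨y, u, w⟩ hq ⟨y', u', w'⟩ hq' heq
      simp only [hdom, Finset.mem_product] at hq hq'
      have hu := (hmemA v u).mp hq.2.1
      have hw := (hmemA v w).mp hq.2.2
      have hu' := (hmemA v u').mp hq'.2.1
      have hw' := (hmemA v w').mp hq'.2.2
      simp only [hG, Prod.mk.injEq] at heq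
      obtain ⟨h1, h2⟩ := heq
      have hyy : y = y' := by
        funext i
        have hin : (i : ℕ) < n := by
          have := i.2
          omega
        have hiv : (((⟨(i : ℕ), hin⟩ : Fin n)) : ℕ) < n - a - b := i.2
        have h := congrFun h1 (⟨(i : ℕ), hin⟩ : Fin n)
        simp only [hpy, dif_pos hiv] at h
        exact h
      have huu : u = u' := by
        funext j
        by_cases hjm : (j : ℕ) < n - a - b
        · rw [hu j (lt_of_lt_of_le hjm hma), hu' j (lt_of_lt_of_le hjm hma)]
        · have h := congrFun h1 j
          simp only [hpy, dif_neg hjm] at h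
          exact h
      have hww : w = w' := by
        funext j
        by_cases hjm : (j : ℕ) < n - a - b
        · rw [hw j (lt_of_lt_of_le hjm hma), hw' j (lt_of_lt_of_le hjm hma)]
        · have h := congrFun h2 j
          simp only [hpy, dif_neg hjm] at h
          exact h
      rw [hyy, huu, hww]
    have e1 : (∑ q ∈ dom, ‖D (G q).1 (G q).2‖ ^ 2) =
        (2 ^ (n - a - b) : ℝ) * ∑ u ∈ A v, ∑ w ∈ A v, ‖D u w‖ ^ 2 := by
      rw [hdom, Finset.sum_product]
      have hcongr : ∀ y : Fin (n - a - b) → Fin 2,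
          (∑ p ∈ (A v) ×ˢ (A v), ‖D (G (y, p)).1 (G (y, p)).2‖ ^ 2) =
            ∑ u ∈ A v, ∑ w ∈ A v, ‖D u w‖ ^ 2 := by
        intro y
        rw [Finset.sum_product]
        refine Finset.sum_congr rfl fun u hu => Finset.sum_congr rfl fun w hw => ?_
        simp only [hG]
        rw [hval y u w hu hw]
      simp_rw [hcongr]
      rw [Finset.sum_const, Finset.card_univ, nsmul_eq_mul]
      congr 1
      norm_num [Fintype.card_fun]
    have e2 : (∑ p ∈ dom.image G, ‖D p.1 p.2‖ ^ 2) =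
        ∑ q ∈ dom, ‖D (G q).1 (G q).2‖ ^ 2 :=
      Finset.sum_image hinj
    have e3 : (∑ p ∈ dom.image G, ‖D p.1 p.2‖ ^ 2) ≤
        ∑ p : QIdx n × QIdx n, ‖D p.1 p.2‖ ^ 2 :=
      Finset.sum_le_sum_of_subset_of_nonneg (Finset.subset_univ _)
        (fun _ _ _ => by positivity)
    have e4 : (∑ p : QIdx n × QIdx n, ‖D p.1 p.2‖ ^ 2) =
        ∑ u : QIdx n, ∑ w : QIdx n, ‖D u w‖ ^ 2 := Fintype.sum_prod_type _
    have hkey : (2 ^ (n - a - b) : ℝ) * (∑ u ∈ A v, ∑ w ∈ A v, ‖D u w‖ ^ 2) ≤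
        2 ^ n * (ε ^ 2 / 2 ^ (a + b)) := by
      rw [← e1]
      rw [← e2]
      exact le_trans e3 (le_trans (le_of_eq e4) hFD)
    have h2n : (2 : ℝ) ^ n = 2 ^ (n - a - b) * 2 ^ (a + b) := by
      rw [← pow_add]
      congr 1
      omega
    have hm2 : (0 : ℝ) < 2 ^ (n - a - b) := by positivity
    have hrhs : (2 : ℝ) ^ n * (ε ^ 2 / 2 ^ (a + b)) = 2 ^ (n - a - b) * ε ^ 2 := by
      rw [h2n]
      field_simp
    rw [hrhs] at hkey
    exact le_of_mul_le_mul_left hkey hm2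
  have hAu_eq : ∀ v u : QIdx n, u ∈ A v → A u = A v := by
    intro v u hu
    rw [hmemA] at hu
    ext w'
    rw [hmemA, hmemA]
    constructor
    · intro h j hj
      rw [h j hj, hu j hj]
    · intro h j hj
      rw [h j hj, ← hu j hj]
  -- operator norm bound
  have hkeyψ : ∀ ψ : EuclideanSpace ℂ (QIdx n),
      ∑ u : QIdx n, ‖∑ w, D u w * ψ w‖ ^ 2 ≤ ε ^ 2 * ∑ w : QIdx n, ‖ψ w‖ ^ 2 := by
    intro ψ
    have hrow : ∀ u : QIdx n, ‖∑ w, D u w * ψ w‖ ^ 2 ≤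
        (∑ w ∈ A u, ‖D u w‖ ^ 2) * ∑ w ∈ A u, ‖ψ w‖ ^ 2 := by
      intro u
      have hres : (∑ w, D u w * ψ w) = ∑ w ∈ A u, D u w * ψ w := by
        symm
        apply Finset.sum_subset (Finset.subset_univ _)
        intro w _ hw
        rw [hmemA] at hw
        push_neg at hw
        obtain ⟨j, hj, hne⟩ := hw
        rw [hD0 u w ⟨j, hj, fun h => hne h.symm⟩, zero_mul]
      rw [hres]
      calc ‖∑ w ∈ A u, D u w * ψ w‖ ^ 2
          ≤ (∑ w ∈ A u, ‖D u w‖ * ‖ψ w‖) ^ 2 := by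
            apply pow_le_pow_left₀ (norm_nonneg _)
            refine (norm_sum_le _ _).trans (le_of_eq ?_)
            exact Finset.sum_congr rfl fun w _ => norm_mul _ _
        _ ≤ (∑ w ∈ A u, ‖D u w‖ ^ 2) * ∑ w ∈ A u, ‖ψ w‖ ^ 2 :=
            Finset.sum_mul_sq_le_sq_mul_sq _ _ _
    calc ∑ u : QIdx n, ‖∑ w, D u w * ψ w‖ ^ 2
        ≤ ∑ u : QIdx n, (∑ w ∈ A u, ‖D u w‖ ^ 2) * ∑ w ∈ A u, ‖ψ w‖ ^ 2 :=
          Finset.sum_le_sum fun u _ => hrow u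
      _ = ∑ u : QIdx n, ∑ w : QIdx n,
            (if (∀ j : Fin n, (j : ℕ) < n - a → w j = u j) then
              (∑ w' ∈ A u, ‖D u w'‖ ^ 2) * ‖ψ w‖ ^ 2 else 0) := by
          refine Finset.sum_congr rfl fun u _ => ?_
          rw [Finset.mul_sum, hAdef, Finset.sum_filter]
      _ = ∑ w : QIdx n, ∑ u : QIdx n,
            (if (∀ j : Fin n, (j : ℕ) < n - a → w j = u j) then
              (∑ w' ∈ A u, ‖D u w'‖ ^ 2) * ‖ψ w‖ ^ 2 else 0) := Finset.sum_comm
      _ ≤ ∑ w : QIdx n, ε ^ 2 * ‖ψ w‖ ^ 2 := by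
          refine Finset.sum_le_sum fun w _ => ?_
          have hstep : (∑ u : QIdx n,
              (if (∀ j : Fin n, (j : ℕ) < n - a → w j = u j) then
                (∑ w' ∈ A u, ‖D u w'‖ ^ 2) * ‖ψ w‖ ^ 2 else 0)) =
              ∑ u ∈ A w, (∑ w' ∈ A u, ‖D u w'‖ ^ 2) * ‖ψ w‖ ^ 2 := by
            rw [hAdef, Finset.sum_filter]
            refine Finset.sum_congr rfl fun u _ => ?_
            refine if_congr ?_ rfl rfl
            constructor
            · intro h j hj
              exact (h j hj).symm
            · intro h j hj
              exact (h j hj).symm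
          rw [hstep]
          have hsl : (∑ u ∈ A w, (∑ w' ∈ A u, ‖D u w'‖ ^ 2)) ≤ ε ^ 2 := by
            have : (∑ u ∈ A w, (∑ w' ∈ A u, ‖D u w'‖ ^ 2)) =
                ∑ u ∈ A w, ∑ w' ∈ A w, ‖D u w'‖ ^ 2 :=
              Finset.sum_congr rfl fun u hu => by rw [hAu_eq w u hu]
            rw [this]
            exact hslice w
          calc ∑ u ∈ A w, (∑ w' ∈ A u, ‖D u w'‖ ^ 2) * ‖ψ w‖ ^ 2
              = (∑ u ∈ A w, ∑ w' ∈ A u, ‖D u w'‖ ^ 2) * ‖ψ w‖ ^ 2 := by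
                rw [Finset.sum_mul]
            _ ≤ ε ^ 2 * ‖ψ w‖ ^ 2 :=
                mul_le_mul_of_nonneg_right hsl (by positivity)
      _ = ε ^ 2 * ∑ w : QIdx n, ‖ψ w‖ ^ 2 := by rw [Finset.mul_sum]
  -- conclude
  refine ContinuousLinearMap.opNorm_le_bound _ hε.le fun ψ => ?_
  have happ : ∀ u, (LinearMap.toContinuousLinearMap (Matrix.toEuclideanLin D)) ψ u =
      ∑ w, D u w * ψ w := by
    intro u
    simp [Matrix.toEuclideanLin_apply, Matrix.mulVec, dotProduct]
  calc ‖(LinearMap.toContinuousLinearMap (Matrix.toEuclideanLin D)) ψ‖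
      = Real.sqrt (∑ u : QIdx n,
          ‖(LinearMap.toContinuousLinearMap (Matrix.toEuclideanLin D)) ψ u‖ ^ 2) :=
        EuclideanSpace.norm_eq _
    _ = Real.sqrt (∑ u : QIdx n, ‖∑ w, D u w * ψ w‖ ^ 2) := by
        simp only [happ]
    _ ≤ Real.sqrt (ε ^ 2 * ∑ w : QIdx n, ‖ψ w‖ ^ 2) := Real.sqrt_le_sqrt (hkeyψ ψ)
    _ = ε * Real.sqrt (∑ w : QIdx n, ‖ψ w‖ ^ 2) := by
        rw [Real.sqrt_mul (sq_nonneg ε), Real.sqrt_sq hε.le]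
    _ = ε * ‖ψ‖ := by rw [EuclideanSpace.norm_eq]

end PauliSpec
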